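/- arXiv:1401.4566 — 4 statements merged into one kernel-verified Lean document; each statement's English description precedes it below -/
import Mathlib

section
/- Let f : ℝ → ℝ be twice differentiable with f''(x) ≥ α (f'(x))² for all x in the interval [-R, R], where α, R > 0, and suppose |f'(x)| ≤ G on [-R, R]. Then with β = (1/2) min(α, 1/(4GR)), for all x, y ∈ [-R, R]: f(x) ≥ f(y) + f'(y)(x - y) + (β/2)(f'(y)(x - y))². -/
private lemma aux_g_hasDerivAt (v : ℝ) (hv : v < 1) :
    HasDerivAt (fun w : ℝ => -Real.log (1 - w) - w - w ^ 2 / 4)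
      (v / 2 * (1 + v) / (1 - v)) v := by
  have h0 : (1 : ℝ) - v ≠ 0 := by linarith
  have h1 : HasDerivAt (fun w : ℝ => 1 - w) (-1) v := (hasDerivAt_id v).const_sub 1
  have hl : HasDerivAt (fun w : ℝ => Real.log (1 - w)) (-1 / (1 - v)) v := h1.log h0
  have hp : HasDerivAt (fun w : ℝ => w ^ 2 / 4) (2 * v ^ 1 / 4) v :=
    (hasDerivAt_pow 2 v).div_const 4
  have : HasDerivAt (fun w : ℝ => -Real.log (1 - w) - w - w ^ 2 / 4)
      (-(-1 / (1 - v)) - 1 - 2 * v ^ 1 / 4) v := (hl.neg.sub (hasDerivAt_id v)).sub hp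
  convert this using 1
  field_simp
  ring

private lemma aux_log_ineq (u : ℝ) (hu : |u| ≤ 1 / 2) :
    Real.log (1 - u) ≤ -(u + u ^ 2 / 4) := by
  set g : ℝ → ℝ := fun w => -Real.log (1 - w) - w - w ^ 2 / 4 with hg
  have habs := abs_le.1 hu
  have hg0 : g 0 = 0 := by simp [hg]
  have key : 0 ≤ g u := by
    rcases le_total 0 u with hu0 | hu0
    · have hmono : MonotoneOn g (Set.Icc (0 : ℝ) (1 / 2)) := by
        apply monotoneOn_of_hasDerivWithinAt_nonneg (f' := fun v => v / 2 * (1 + v) / (1 - v))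
          (convex_Icc _ _)
        · intro v hv
          exact (aux_g_hasDerivAt v (by have := hv.2; linarith)).continuousAt.continuousWithinAt
        · intro v hv
          rw [interior_Icc] at hv
          exact (aux_g_hasDerivAt v (by have := hv.2; linarith)).hasDerivWithinAt
        · intro v hv
          rw [interior_Icc] at hv
          have h1 : (0 : ℝ) < 1 - v := by linarith [hv.2]
          have h2 : 0 ≤ v / 2 * (1 + v) := by nlinarith [hv.1]
          positivity
      have := hmono (Set.mem_Icc.2 ⟨le_refl 0, by norm_num⟩)
        (Set.mem_Icc.2 ⟨hu0, habs.2⟩) hu0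
      rwa [hg0] at this
    · have hanti : AntitoneOn g (Set.Icc (-(1 / 2) : ℝ) 0) := by
        apply antitoneOn_of_hasDerivWithinAt_nonpos (f' := fun v => v / 2 * (1 + v) / (1 - v))
          (convex_Icc _ _)
        · intro v hv
          exact (aux_g_hasDerivAt v (by have := hv.2; linarith)).continuousAt.continuousWithinAt
        · intro v hv
          rw [interior_Icc] at hv
          exact (aux_g_hasDerivAt v (by have := hv.2; linarith)).hasDerivWithinAt
        · intro v hv
          rw [interior_Icc] at hv
          have h1 : (0 : ℝ) < 1 - v := by linarith [hv.2]
          have h2 : v / 2 * (1 + v) ≤ 0 := by nlinarith [hv.1, hv.2]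
          exact div_nonpos_of_nonpos_of_nonneg h2 h1.le
      have := hanti (Set.mem_Icc.2 ⟨habs.1, hu0⟩)
        (Set.mem_Icc.2 ⟨by norm_num, le_refl 0⟩) hu0
      rwa [hg0] at this
  simp only [hg] at key
  linarith

private lemma aux_concave_tangent {S : Set ℝ} {h : ℝ → ℝ} (hc : ConcaveOn ℝ S h)
    (hd : Differentiable ℝ h) {x y : ℝ} (hx : x ∈ S) (hy : y ∈ S) :
    h x ≤ h y + deriv h y * (x - y) := by
  rcases lt_trichotomy x y with hlt | heq | hlt
  · have hs := hc.deriv_le_slope hx hy hlt (hd y)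
    rw [slope_def_field] at hs
    rw [le_div_iff₀ (by linarith)] at hs
    nlinarith
  · subst heq; simp
  · have hs := hc.slope_le_deriv hy hx hlt (hd y)
    rw [slope_def_field] at hs
    rw [div_le_iff₀ (by linarith)] at hs
    nlinarith

theorem exp_concave_key_property
    (f : ℝ → ℝ) (α G R : ℝ) (hα : 0 < α) (hG : 0 < G) (hR : 0 < R)
    (hf : Differentiable ℝ f) (hf' : Differentiable ℝ (deriv f))
    (hsec : ∀ x ∈ Set.Icc (-R) R, α * (deriv f x) ^ 2 ≤ deriv (deriv f) x)
    (hlip : ∀ x ∈ Set.Icc (-R) R, |deriv f x| ≤ G) :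
    ∀ x ∈ Set.Icc (-R) R, ∀ y ∈ Set.Icc (-R) R,
      f y + deriv f y * (x - y)
        + (1 / 2 * min α (1 / (4 * G * R))) / 2 * (deriv f y * (x - y)) ^ 2 ≤ f x := by
  intro x hx y hy
  set b : ℝ := min α (1 / (4 * G * R)) with hbdef
  have hGR : 0 < G * R := mul_pos hG hR
  have hb : 0 < b := lt_min hα (by positivity)
  have hbα : b ≤ α := min_le_left _ _
  have hbGR : b ≤ 1 / (4 * G * R) := min_le_right _ _
  set h : ℝ → ℝ := fun t => Real.exp (-(b * f t)) with hhdef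
  set h' : ℝ → ℝ := fun t => Real.exp (-(b * f t)) * -(b * deriv f t) with hh'def
  have hd1 : ∀ t, HasDerivAt h (h' t) t := by
    intro t
    exact (((hf t).hasDerivAt.const_mul b).neg).exp
  have hderiv : deriv h = h' := funext fun t => (hd1 t).deriv
  have hdiffh : Differentiable ℝ h := fun t => (hd1 t).differentiableAt
  have hd2 : ∀ t, HasDerivAt h'
      (h' t * -(b * deriv f t) + h t * -(b * deriv (deriv f) t)) t := by
    intro t
    exact (hd1 t).mul (((hf' t).hasDerivAt.const_mul b).neg)
  have hdiffh' : Differentiable ℝ h' := fun t => (hd2 t).differentiableAt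
  -- concavity of h on the interval
  have hconc : ConcaveOn ℝ (Set.Icc (-R) R) h := by
    apply concaveOn_of_deriv2_nonpos (convex_Icc _ _) hdiffh.continuous.continuousOn
      (hdiffh.differentiableOn) (by rw [hderiv]; exact hdiffh'.differentiableOn)
    intro t ht
    rw [interior_Icc] at ht
    have ht' : t ∈ Set.Icc (-R) R := Set.mem_Icc.2 ⟨ht.1.le, ht.2.le⟩
    have h2 : deriv^[2] h t = h' t * -(b * deriv f t) + h t * -(b * deriv (deriv f) t) := by
      have : deriv^[2] h t = deriv (deriv h) t := rfl
      rw [this, hderiv, (hd2 t).deriv]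
    rw [h2]
    have hE : 0 < Real.exp (-(b * f t)) := Real.exp_pos _
    have hsect := hsec t ht'
    have hsq : (0:ℝ) ≤ (deriv f t) ^ 2 := sq_nonneg _
    have hle : b * (deriv f t) ^ 2 ≤ deriv (deriv f) t := by nlinarith
    simp only [hh'def, hhdef]
    have h3 : b * (b * deriv f t ^ 2) ≤ b * deriv (deriv f) t :=
      mul_le_mul_of_nonneg_left hle hb.le
    nlinarith [mul_le_mul_of_nonneg_left h3 hE.le]
  -- tangent line inequality
  have htan := aux_concave_tangent hconc hdiffh hx hy
  rw [hderiv] at htan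
  set z : ℝ := deriv f y * (x - y) with hzdef
  set E : ℝ := Real.exp (-(b * f y)) with hEdef
  have hE : 0 < E := Real.exp_pos _
  have htan' : Real.exp (-(b * f x)) ≤ E * (1 - b * z) := by
    simp only [hhdef, hh'def] at htan
    calc Real.exp (-(b * f x)) ≤ E + E * -(b * deriv f y) * (x - y) := htan
    _ = E * (1 - b * z) := by rw [hzdef]; ring
  have hpos : 0 < 1 - b * z := by
    by_contra hcon
    push_neg at hcon
    have : E * (1 - b * z) ≤ 0 := mul_nonpos_of_nonneg_of_nonpos hE.le hcon
    linarith [Real.exp_pos (-(b * f x)), htan']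
  -- bound |b * z| ≤ 1/2
  have hzb : |z| ≤ G * (2 * R) := by
    rw [hzdef, abs_mul]
    have h1 : |deriv f y| ≤ G := hlip y hy
    have h2 : |x - y| ≤ 2 * R := by
      rw [abs_le]
      constructor <;> [linarith [hx.1, hy.2]; linarith [hx.2, hy.1]]
    exact mul_le_mul h1 h2 (abs_nonneg _) hG.le
  have hbz : |b * z| ≤ 1 / 2 := by
    rw [abs_mul, abs_of_pos hb]
    have h1 : b * |z| ≤ b * (G * (2 * R)) := by
      exact mul_le_mul_of_nonneg_left hzb hb.le
    have h2 : b * (G * (2 * R)) ≤ 1 / 2 := by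
      have := mul_le_mul_of_nonneg_right hbGR (by positivity : (0:ℝ) ≤ G * (2 * R))
      calc b * (G * (2 * R)) ≤ 1 / (4 * G * R) * (G * (2 * R)) := this
      _ = 1 / 2 := by field_simp; ring
    linarith
  -- take logs
  have hlog : b * (f y - f x) ≤ Real.log (1 - b * z) := by
    rw [Real.le_log_iff_exp_le hpos]
    have : Real.exp (b * (f y - f x)) = Real.exp (-(b * f x)) / E := by
      rw [hEdef, ← Real.exp_sub]; ring_nf
    rw [this, div_le_iff₀ hE]
    linarith [htan', mul_comm E (1 - b * z)]
  have hlog2 := aux_log_ineq (b * z) hbz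
  have hfinal : b * (f y - f x) ≤ -(b * z + (b * z) ^ 2 / 4) := le_trans hlog hlog2
  -- conclude
  have hgoal : b * (f y + z + b / 4 * z ^ 2) ≤ b * f x := by nlinarith
  have := (mul_le_mul_iff_right₀ hb).1 hgoal
  rw [hzdef] at this
  nlinarith [this]
end

section
/- Let (Ω, P) be a probability space, x : Ω → ℝᵈ a bounded random vector, y : Ω → {-1,1}, and ℓ : ℝ → ℝ differentiable convex with ℓ'(0) > 0. Suppose there is q > 0 with P(y = 1 | x) ≥ q and P(y = -1 | x) ≥ q almost surely. Then for every w ∈ ℝᵈ, E[(ℓ'(y ⟨w, x⟩))² x xᵀ] ⪰ q (ℓ'(0))² E[x xᵀ] in the positive-semidefinite (Loewner) order. -/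
open MeasureTheory RealInnerProductSpace

lemma condexp_indicator_key {Ω : Type*} {m m0 : MeasurableSpace Ω} (hm : m ≤ m0)
    (P : Measure Ω) [IsProbabilityMeasure P]
    (h : Ω → ℝ) (A : Set Ω) (Hb q : ℝ)
    (hhm : Measurable[m] h) (hA : MeasurableSet A)
    (hh0 : ∀ ω, 0 ≤ h ω) (hhb : ∀ ω, |h ω| ≤ Hb)
    (hcond : ∀ᵐ ω ∂P, q ≤ (P[Set.indicator A (fun _ => (1 : ℝ)) | m]) ω) :
    q * ∫ ω, h ω ∂P ≤ ∫ ω, h ω * Set.indicator A (fun _ => (1 : ℝ)) ω ∂P := by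
  set iA : Ω → ℝ := Set.indicator A (fun _ => (1 : ℝ)) with hiAdef
  have hiA_int : Integrable iA P := (integrable_const (1 : ℝ)).indicator hA
  have hh_meas : Measurable h := hhm.mono hm le_rfl
  have hh_int : Integrable h P :=
    Integrable.mono' (integrable_const Hb) hh_meas.aestronglyMeasurable
      (Filter.Eventually.of_forall fun ω => by simpa using hhb ω)
  have hprod_int : Integrable (h * iA) P :=
    hiA_int.bdd_mul hh_meas.aestronglyMeasurable (Filter.Eventually.of_forall fun ω => by simpa using hhb ω)
  have hpull : P[h * iA | m] =ᵐ[P] h * P[iA | m] :=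
    condExp_mul_of_stronglyMeasurable_left hhm.stronglyMeasurable hprod_int hiA_int
  have hcond_int : Integrable (fun ω => h ω * (P[iA | m]) ω) P :=
    integrable_condExp.bdd_mul hh_meas.aestronglyMeasurable
      (Filter.Eventually.of_forall fun ω => by simpa using hhb ω)
  calc q * ∫ ω, h ω ∂P = ∫ ω, q * h ω ∂P := (integral_const_mul q h).symm
  _ ≤ ∫ ω, h ω * (P[iA | m]) ω ∂P := by
      refine integral_mono_ae (hh_int.const_mul q) hcond_int ?_
      filter_upwards [hcond] with ω hω
      calc q * h ω = h ω * q := mul_comm _ _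
      _ ≤ h ω * (P[iA | m]) ω := mul_le_mul_of_nonneg_left hω (hh0 ω)
  _ = ∫ ω, (h * P[iA | m]) ω ∂P := rfl
  _ = ∫ ω, (P[h * iA | m]) ω ∂P := (integral_congr_ae hpull).symm
  _ = ∫ ω, (h * iA) ω ∂P := integral_condExp hm
  _ = ∫ ω, h ω * iA ω ∂P := rfl

theorem assumption_holds_under_label_noise
    {Ω : Type*} [MeasurableSpace Ω] (P : Measure Ω) [IsProbabilityMeasure P]
    {d : ℕ} (x : Ω → EuclideanSpace ℝ (Fin d)) (y : Ω → ℝ)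
    (hx : Measurable x) (hy : Measurable y)
    (C : ℝ) (hxb : ∀ ω, ‖x ω‖ ≤ C)
    (hy1 : ∀ ω, y ω = 1 ∨ y ω = -1)
    (ℓ : ℝ → ℝ) (hdiff : Differentiable ℝ ℓ) (hconv : ConvexOn ℝ Set.univ ℓ)
    (hl0 : 0 < deriv ℓ 0)
    (q : ℝ) (hq : 0 < q)
    (h1 : ∀ᵐ ω ∂P, q ≤
      (P[Set.indicator {ω' | y ω' = 1} (fun _ => (1 : ℝ)) |
        MeasurableSpace.comap x inferInstance]) ω)
    (h2 : ∀ᵐ ω ∂P, q ≤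
      (P[Set.indicator {ω' | y ω' = -1} (fun _ => (1 : ℝ)) |
        MeasurableSpace.comap x inferInstance]) ω) :
    ∀ w v : EuclideanSpace ℝ (Fin d),
      q * (deriv ℓ 0) ^ 2 * ∫ ω, ⟪v, x ω⟫ ^ 2 ∂P ≤
        ∫ ω, (deriv ℓ (y ω * ⟪w, x ω⟫)) ^ 2 * ⟪v, x ω⟫ ^ 2 ∂P := by
  intro w v
  classical
  have hm : MeasurableSpace.comap x inferInstance ≤ ‹MeasurableSpace Ω› := hx.comap_le
  have hxm : Measurable[MeasurableSpace.comap x inferInstance] x :=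
    measurable_iff_comap_le.mpr le_rfl
  have hΩ : Nonempty Ω := by
    by_contra hne
    rw [not_nonempty_iff] at hne
    have h0 : (Set.univ : Set Ω) = ∅ := Set.univ_eq_empty_iff.mpr hne
    have := measure_univ (μ := P)
    rw [h0, measure_empty] at this
    exact zero_ne_one this
  obtain ⟨ω0⟩ := hΩ
  have hC : 0 ≤ C := (norm_nonneg _).trans (hxb ω0)
  have mono : Monotone (deriv ℓ) := by
    have h := hconv.monotoneOn_deriv (fun t _ => hdiff t)
    rwa [monotoneOn_univ] at h
  set M := ‖w‖ * C with hM
  set K := max |deriv ℓ (-M)| |deriv ℓ M| with hKdef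
  have hcb : ∀ ω, |⟪w, x ω⟫| ≤ M := by
    intro ω
    calc |⟪w, x ω⟫| ≤ ‖w‖ * ‖x ω‖ := abs_real_inner_le_norm w (x ω)
    _ ≤ ‖w‖ * C := mul_le_mul_of_nonneg_left (hxb ω) (norm_nonneg w)
  have hKb : ∀ t : ℝ, |t| ≤ M → |deriv ℓ t| ≤ K := by
    intro t ht
    rcases abs_le.mp ht with ⟨htl, htr⟩
    rcases le_or_gt 0 (deriv ℓ t) with hs | hs
    · rw [abs_of_nonneg hs]
      exact le_trans (le_trans (mono htr) (le_abs_self _)) (le_max_right _ _)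
    · rw [abs_of_neg hs]
      refine le_trans ?_ (le_max_left _ _)
      have : deriv ℓ (-M) ≤ deriv ℓ t := mono (by linarith)
      calc -deriv ℓ t ≤ -deriv ℓ (-M) := by linarith
      _ ≤ |deriv ℓ (-M)| := neg_le_abs _
  have hK0 : 0 ≤ K := le_trans (abs_nonneg _) (le_max_left _ _)
  set g : Ω → ℝ := fun ω => ⟪v, x ω⟫ ^ 2 with hgdef
  set c : Ω → ℝ := fun ω => ⟪w, x ω⟫ with hcdef
  set hp : Ω → ℝ := fun ω => (deriv ℓ (c ω)) ^ 2 * g ω with hpdef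
  set hn : Ω → ℝ := fun ω => (deriv ℓ (-c ω)) ^ 2 * g ω with hndef
  have hdm : Measurable (deriv ℓ) := measurable_deriv ℓ
  have hcm : Measurable[MeasurableSpace.comap x inferInstance] c :=
    measurable_const.inner hxm
  have hgm : Measurable[MeasurableSpace.comap x inferInstance] g :=
    (measurable_const.inner hxm).pow_const 2
  have hpm : Measurable[MeasurableSpace.comap x inferInstance] hp :=
    ((hdm.comp hcm).pow_const 2).mul hgm
  have hnm : Measurable[MeasurableSpace.comap x inferInstance] hn :=
    ((hdm.comp hcm.neg).pow_const 2).mul hgm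
  set Gb := (‖v‖ * C) ^ 2 with hGbdef
  have hvb : ∀ ω, |⟪v, x ω⟫| ≤ ‖v‖ * C := by
    intro ω
    calc |⟪v, x ω⟫| ≤ ‖v‖ * ‖x ω‖ := abs_real_inner_le_norm v (x ω)
    _ ≤ ‖v‖ * C := mul_le_mul_of_nonneg_left (hxb ω) (norm_nonneg v)
  have hgb : ∀ ω, |g ω| ≤ Gb := by
    intro ω
    calc |g ω| = |⟪v, x ω⟫| ^ 2 := by rw [abs_of_nonneg (sq_nonneg _), sq_abs]
    _ ≤ (‖v‖ * C) ^ 2 := pow_le_pow_left₀ (abs_nonneg _) (hvb ω) 2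
  have hg0 : ∀ ω, 0 ≤ g ω := fun ω => sq_nonneg _
  set Hb := K ^ 2 * Gb with hHbdef
  have hpb : ∀ ω, |hp ω| ≤ Hb := by
    intro ω
    rw [hpdef]
    calc |(deriv ℓ (c ω)) ^ 2 * g ω| = |deriv ℓ (c ω)| ^ 2 * |g ω| := by
          rw [abs_mul, abs_pow]
    _ ≤ K ^ 2 * Gb := by
          apply mul_le_mul (pow_le_pow_left₀ (abs_nonneg _) (hKb _ (hcb ω)) 2)
            (hgb ω) (abs_nonneg _) (pow_nonneg hK0 2)
  have hnb : ∀ ω, |hn ω| ≤ Hb := by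
    intro ω
    rw [hndef]
    have hcb' : |(-c ω)| ≤ M := by rw [abs_neg]; exact hcb ω
    calc |(deriv ℓ (-c ω)) ^ 2 * g ω| = |deriv ℓ (-c ω)| ^ 2 * |g ω| := by
          rw [abs_mul, abs_pow]
    _ ≤ K ^ 2 * Gb := by
          apply mul_le_mul (pow_le_pow_left₀ (abs_nonneg _) (hKb _ hcb') 2)
            (hgb ω) (abs_nonneg _) (pow_nonneg hK0 2)
  have hp0 : ∀ ω, 0 ≤ hp ω := fun ω => mul_nonneg (sq_nonneg _) (hg0 ω)
  have hn0 : ∀ ω, 0 ≤ hn ω := fun ω => mul_nonneg (sq_nonneg _) (hg0 ω)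
  have hbint : ∀ (f : Ω → ℝ) (B : ℝ), Measurable f → (∀ ω, |f ω| ≤ B) →
      Integrable f P := by
    intro f B hf hfb
    exact Integrable.mono' (integrable_const B) hf.aestronglyMeasurable
      (Filter.Eventually.of_forall fun ω => by simpa using hfb ω)
  have hg_int : Integrable g P := hbint g Gb (hgm.mono hm le_rfl) hgb
  have hp_int : Integrable hp P := hbint hp Hb (hpm.mono hm le_rfl) hpb
  have hn_int : Integrable hn P := hbint hn Hb (hnm.mono hm le_rfl) hnb
  set A : Set Ω := {ω' | y ω' = 1} with hAdef
  set B : Set Ω := {ω' | y ω' = -1} with hBdef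
  have hA : MeasurableSet A := hy (measurableSet_singleton 1)
  have hB : MeasurableSet B := hy (measurableSet_singleton (-1))
  set iA : Ω → ℝ := Set.indicator A (fun _ => (1 : ℝ)) with hiAdef
  set iB : Ω → ℝ := Set.indicator B (fun _ => (1 : ℝ)) with hiBdef
  have hdecomp : ∀ ω, (deriv ℓ (y ω * ⟪w, x ω⟫)) ^ 2 * ⟪v, x ω⟫ ^ 2
      = hp ω * iA ω + hn ω * iB ω := by
    intro ω
    rcases hy1 ω with hyy | hyy
    · have hωA : ω ∈ A := hyy
      have hωB : ω ∉ B := by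
        intro hmem
        rw [hBdef] at hmem
        simp only [Set.mem_setOf_eq] at hmem
        rw [hyy] at hmem; norm_num at hmem
      simp [hiAdef, hiBdef, Set.indicator_of_mem hωA, Set.indicator_of_notMem hωB,
        hpdef, hgdef, hcdef, hyy]
    · have hωB : ω ∈ B := hyy
      have hωA : ω ∉ A := by
        intro hmem
        rw [hAdef] at hmem
        simp only [Set.mem_setOf_eq] at hmem
        rw [hyy] at hmem; norm_num at hmem
      simp [hiAdef, hiBdef, Set.indicator_of_mem hωB, Set.indicator_of_notMem hωA,
        hndef, hgdef, hcdef, hyy]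
  have hpa_int : Integrable (fun ω => hp ω * iA ω) P :=
    ((integrable_const (1 : ℝ)).indicator hA).bdd_mul
      (hpm.mono hm le_rfl).aestronglyMeasurable (Filter.Eventually.of_forall fun ω => by simpa using hpb ω)
  have hnb_int : Integrable (fun ω => hn ω * iB ω) P :=
    ((integrable_const (1 : ℝ)).indicator hB).bdd_mul
      (hnm.mono hm le_rfl).aestronglyMeasurable (Filter.Eventually.of_forall fun ω => by simpa using hnb ω)
  have hpt : ∀ ω, (deriv ℓ 0) ^ 2 * g ω ≤ hp ω + hn ω := by
    intro ω
    rcases le_total 0 (c ω) with hc0 | hc0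
    · have h1' : deriv ℓ 0 ≤ deriv ℓ (c ω) := mono hc0
      have h2' : (deriv ℓ 0) ^ 2 ≤ (deriv ℓ (c ω)) ^ 2 :=
        pow_le_pow_left₀ hl0.le h1' 2
      have h3' := mul_le_mul_of_nonneg_right h2' (hg0 ω)
      calc (deriv ℓ 0) ^ 2 * g ω ≤ (deriv ℓ (c ω)) ^ 2 * g ω := h3'
      _ ≤ hp ω + hn ω := by
            have hrw : hp ω = (deriv ℓ (c ω)) ^ 2 * g ω := rfl
            rw [hrw]; linarith [hn0 ω]
    · have h1' : deriv ℓ 0 ≤ deriv ℓ (-c ω) := mono (by linarith)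
      have h2' : (deriv ℓ 0) ^ 2 ≤ (deriv ℓ (-c ω)) ^ 2 :=
        pow_le_pow_left₀ hl0.le h1' 2
      have h3' := mul_le_mul_of_nonneg_right h2' (hg0 ω)
      calc (deriv ℓ 0) ^ 2 * g ω ≤ (deriv ℓ (-c ω)) ^ 2 * g ω := h3'
      _ ≤ hp ω + hn ω := by
            have hrw : hn ω = (deriv ℓ (-c ω)) ^ 2 * g ω := rfl
            rw [hrw]; linarith [hp0 ω]
  have step1 : (deriv ℓ 0) ^ 2 * ∫ ω, g ω ∂P ≤ (∫ ω, hp ω ∂P) + ∫ ω, hn ω ∂P := by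
    calc (deriv ℓ 0) ^ 2 * ∫ ω, g ω ∂P = ∫ ω, (deriv ℓ 0) ^ 2 * g ω ∂P :=
          (integral_const_mul _ _).symm
    _ ≤ ∫ ω, (hp ω + hn ω) ∂P :=
          integral_mono (hg_int.const_mul _) (hp_int.add hn_int) hpt
    _ = (∫ ω, hp ω ∂P) + ∫ ω, hn ω ∂P := integral_add hp_int hn_int
  have keyA : q * ∫ ω, hp ω ∂P ≤ ∫ ω, hp ω * iA ω ∂P :=
    condexp_indicator_key hm P hp A Hb q hpm hA hp0 hpb h1
  have keyB : q * ∫ ω, hn ω ∂P ≤ ∫ ω, hn ω * iB ω ∂P :=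
    condexp_indicator_key hm P hn B Hb q hnm hB hn0 hnb h2
  have hfinal : ∫ ω, (deriv ℓ (y ω * ⟪w, x ω⟫)) ^ 2 * ⟪v, x ω⟫ ^ 2 ∂P
      = (∫ ω, hp ω * iA ω ∂P) + ∫ ω, hn ω * iB ω ∂P := by
    rw [← integral_add hpa_int hnb_int]
    exact integral_congr_ae (Filter.Eventually.of_forall hdecomp)
  rw [hfinal]
  have hmulq : q * ((deriv ℓ 0) ^ 2 * ∫ ω, g ω ∂P)
      ≤ q * ((∫ ω, hp ω ∂P) + ∫ ω, hn ω ∂P) :=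
    mul_le_mul_of_nonneg_left step1 hq.le
  calc q * (deriv ℓ 0) ^ 2 * ∫ ω, ⟪v, x ω⟫ ^ 2 ∂P
      = q * ((deriv ℓ 0) ^ 2 * ∫ ω, g ω ∂P) := by rw [mul_assoc]
  _ ≤ q * ((∫ ω, hp ω ∂P) + ∫ ω, hn ω ∂P) := hmulq
  _ = q * (∫ ω, hp ω ∂P) + q * ∫ ω, hn ω ∂P := mul_add _ _ _
  _ ≤ (∫ ω, hp ω * iA ω ∂P) + ∫ ω, hn ω * iB ω ∂P := add_le_add keyA keyB
end

section
/- Let M, N be positive definite d×d real matrices with M = N + x xᵀ for some x ∈ ℝᵈ. Then xᵀ M⁻¹ x ≤ log det M − log det N. -/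
open Matrix

theorem logdet_potential_bound
    {d : ℕ} (M N : Matrix (Fin d) (Fin d) ℝ) (x : Fin d → ℝ)
    (hN : N.PosDef) (hM : M.PosDef) (hMN : M = N + Matrix.vecMulVec x x) :
    x ⬝ᵥ (M⁻¹ *ᵥ x) ≤ Real.log M.det - Real.log N.det := by
  set s := x ⬝ᵥ (M⁻¹ *ᵥ x) with hs
  have hMdet : 0 < M.det := hM.det_pos
  have hNdet : 0 < N.det := hN.det_pos
  have hs0 : 0 ≤ s := by
    have := hM.inv.posSemidef.dotProduct_mulVec_nonneg x
    simpa [hs] using this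
  have hNeq : N = M + replicateCol Unit (-x) * replicateRow Unit x := by
    rw [hMN, vecMulVec_eq Unit]
    ext i j
    simp [Matrix.mul_apply, mul_comm]
  have hdet : N.det = M.det * (1 - s) := by
    rw [hNeq, det_add_replicateCol_mul_replicateRow (isUnit_iff_ne_zero.mpr hMdet.ne') (-x) x]
    congr 1
    rw [det_unique]
    simp [Matrix.mul_apply, Matrix.mulVec, dotProduct, hs, Finset.mul_sum, mul_comm,
      sub_eq_add_neg]
    refine Finset.sum_congr rfl fun i _ => Finset.sum_congr rfl fun j _ => ?_
    have := hM.inv.isHermitian.apply i j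
    simp only [star_trivial] at this
    rw [this]
  have h1s : 0 < 1 - s := by
    rw [hdet] at hNdet
    nlinarith
  have hlog : Real.log N.det = Real.log M.det + Real.log (1 - s) := by
    rw [hdet, Real.log_mul hMdet.ne' h1s.ne']
  rw [hlog]
  have := Real.log_le_sub_one_of_pos h1s
  linarith
end

section
/- Let a > 0, n a positive integer, d a positive integer, and x₁, …, x_n ∈ ℝᵈ with ‖x_i‖ ≤ 1 for all i. Let M₀ = a·I and M_n = a·I + ∑_{i=1}^n x_i x_iᵀ. Then log det(M_n) − log det(M₀) ≤ d · log(1 + n/(a d)). -/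
open Matrix Finset
set_option maxHeartbeats 1000000 in

theorem logdet_growth_bound
    {d n : ℕ} (hd : 0 < d) (hn : 0 < n) (a : ℝ) (ha : 0 < a)
    (x : Fin n → Fin d → ℝ) (hx : ∀ i, ∑ j, (x i j) ^ 2 ≤ 1) :
    Real.log (Matrix.det (a • (1 : Matrix (Fin d) (Fin d) ℝ)
        + ∑ i, Matrix.vecMulVec (x i) (x i)))
      - Real.log (Matrix.det (a • (1 : Matrix (Fin d) (Fin d) ℝ)))
      ≤ d * Real.log (1 + n / (a * d)) := by
  set S : Matrix (Fin d) (Fin d) ℝ := ∑ i, Matrix.vecMulVec (x i) (x i) with hSdef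
  set M : Matrix (Fin d) (Fin d) ℝ := a • 1 + S with hMdef
  -- each rank-one matrix is PSD
  have hpsd : ∀ i, (Matrix.vecMulVec (x i) (x i)).PosSemidef := by
    intro i
    have h := Matrix.posSemidef_conjTranspose_mul_self (Matrix.replicateRow Unit (x i))
    rwa [Matrix.conjTranspose_replicateRow, star_trivial, ← Matrix.vecMulVec_eq Unit] at h
  have hSpsd : S.PosSemidef := by
    rw [hSdef]
    exact Finset.sum_induction _ Matrix.PosSemidef (fun A B hA hB => hA.add hB)
      Matrix.PosSemidef.zero (fun i _ => hpsd i)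
  have haI : (a • (1 : Matrix (Fin d) (Fin d) ℝ)).PosDef := by
    have : a • (1 : Matrix (Fin d) (Fin d) ℝ) = Matrix.diagonal (fun _ => a) := by
      ext i j; by_cases h : i = j <;> simp [h, Matrix.one_apply, Matrix.diagonal]
    rw [this, Matrix.posDef_diagonal_iff]
    exact fun _ => ha
  have hMpd : M.PosDef := haI.add_posSemidef hSpsd
  have hH : M.IsHermitian := hMpd.isHermitian
  set μ := hH.eigenvalues with hμ
  have hμpos : ∀ j, 0 < μ j := hMpd.eigenvalues_pos
  -- determinant and trace
  have hdet : M.det = ∏ j, μ j := by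
    simpa using hH.det_eq_prod_eigenvalues
  have htr : ∑ j, μ j = M.trace := by
    conv_rhs => rw [hH.spectral_theorem]
    rw [Unitary.conjStarAlgAut_apply, Matrix.trace_mul_cycle]
    have hu : (star (hH.eigenvectorUnitary : Matrix (Fin d) (Fin d) ℝ)) *
        (hH.eigenvectorUnitary : Matrix (Fin d) (Fin d) ℝ) = 1 :=
      Matrix.mem_unitaryGroup_iff'.mp (hH.eigenvectorUnitary).2
    rw [hu, Matrix.one_mul, Matrix.trace_diagonal]
    simp [hμ]
  have htrS : S.trace ≤ n := by
    rw [hSdef, Matrix.trace_sum]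
    have : ∀ i, (Matrix.vecMulVec (x i) (x i)).trace = ∑ j, (x i j) ^ 2 := by
      intro i
      simp [Matrix.trace, Matrix.diag, Matrix.vecMulVec_apply, sq]
    calc ∑ i, (Matrix.vecMulVec (x i) (x i)).trace = ∑ i : Fin n, ∑ j, (x i j)^2 := by
          simp [this]
      _ ≤ ∑ i : Fin n, (1:ℝ) := Finset.sum_le_sum (fun i _ => hx i)
      _ = n := by simp
  have htrM : M.trace ≤ a * d + n := by
    have h1 : (a • (1 : Matrix (Fin d) (Fin d) ℝ)).trace = a * d := by
      simp [Matrix.trace_smul, Matrix.trace_one, smul_eq_mul]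
    rw [hMdef, Matrix.trace_add, h1]
    linarith
  have hsum : ∑ j, μ j ≤ a * d + n := htr ▸ htrM
  -- Jensen's inequality on log
  have hdR : (0:ℝ) < d := by exact_mod_cast hd
  have jensen : ∑ j, (d:ℝ)⁻¹ • Real.log (μ j) ≤
      Real.log (∑ j, (d:ℝ)⁻¹ • μ j) := by
    apply (strictConcaveOn_log_Ioi.concaveOn).le_map_sum
    · intro j _; positivity
    · simp [Finset.card_univ]; field_simp
    · intro j _; exact hμpos j
  -- turn into sums
  have hlogdet : Real.log M.det = ∑ j, Real.log (μ j) := by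
    rw [hdet, Real.log_prod]
    exact fun j _ => (hμpos j).ne'
  have key : ∑ j, Real.log (μ j) ≤ d * Real.log ((d:ℝ)⁻¹ * ∑ j, μ j) := by
    have := jensen
    simp only [smul_eq_mul, ← Finset.mul_sum] at this
    calc ∑ j, Real.log (μ j) = d * ((d:ℝ)⁻¹ * ∑ j, Real.log (μ j)) := by
          field_simp
      _ ≤ d * Real.log ((d:ℝ)⁻¹ * ∑ j, μ j) := by
          apply mul_le_mul_of_nonneg_left this hdR.le
  have hμsumpos : 0 < ∑ j, μ j :=
    Finset.sum_pos (fun j _ => hμpos j) (by simp [Finset.univ_nonempty_iff, Fin.pos_iff_nonempty.mp hd])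
  have hmono : Real.log ((d:ℝ)⁻¹ * ∑ j, μ j) ≤ Real.log ((a * d + n) / d) := by
    apply Real.log_le_log (by positivity)
    rw [div_eq_inv_mul]
    exact mul_le_mul_of_nonneg_left hsum (by positivity)
  have hdet0 : Real.log (Matrix.det (a • (1 : Matrix (Fin d) (Fin d) ℝ))) = d * Real.log a := by
    rw [Matrix.det_smul, Matrix.det_one, mul_one]
    simp [Real.log_pow, Fintype.card_fin]
  have hnR : (0:ℝ) < n := by exact_mod_cast hn
  have hfinal : Real.log ((a * d + n) / d) - Real.log a = Real.log (1 + n / (a * d)) := by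
    have h1 : (1:ℝ) + n / (a * d) = (a * d + n) / (a * d) := by field_simp
    have hA : Real.log ((a*↑d+↑n)/↑d) = Real.log (a*↑d+↑n) - Real.log ↑d :=
      Real.log_div (by positivity) hdR.ne'
    have hB : Real.log ((a*↑d+↑n)/(a*↑d))
        = Real.log (a*↑d+↑n) - (Real.log a + Real.log ↑d) := by
      rw [Real.log_div (by positivity) (by positivity), Real.log_mul ha.ne' hdR.ne']
    rw [h1, hA, hB]; ring
  have : Real.log M.det - Real.log (Matrix.det (a • (1 : Matrix (Fin d) (Fin d) ℝ)))
      ≤ d * Real.log (1 + n / (a * d)) := by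
    rw [hlogdet, hdet0, ← hfinal]
    calc ∑ j, Real.log (μ j) - d * Real.log a
        ≤ d * Real.log ((d:ℝ)⁻¹ * ∑ j, μ j) - d * Real.log a := by linarith [key]
      _ ≤ d * Real.log ((a * d + n) / d) - d * Real.log a := by
          nlinarith [hmono, hdR]
      _ = d * (Real.log ((a * d + n) / d) - Real.log a) := by ring
  simpa [hMdef, hSdef] using this
end
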